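/- arXiv:1606.05291 — 3 statements merged into one kernel-verified Lean document; each statement's English description precedes it below -/
import Mathlib

section
/- Let α ∈ ℝ \ {0}, ε > 0, and let b_α(φ) = ∫₀^ε |φ'(y)|² dy + α(|φ(ε)|² − |φ(0)|²) for φ ∈ H^1(0,ε). Then b_α(φ) ≥ −α² ‖φ‖²_{L²(0,ε)} for all φ ∈ H^1(0,ε). -/
open MeasureTheory intervalIntegral

/-- Lower bound for the transversal Robin form: for α ≠ 0 and φ ∈ H¹(0,ε),
b_α(φ) = ∫₀^ε |φ'|² + α(|φ(ε)|² − |φ(0)|²) ≥ −α² ‖φ‖²_{L²(0,ε)}. -/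
theorem robin_form_lower_bound (ε α : ℝ) (hε : 0 < ε) (hα : α ≠ 0)
    (φ φ' : ℝ → ℂ)
    (hderiv : ∀ x ∈ Set.Icc (0:ℝ) ε, HasDerivAt φ (φ' x) x)
    (hcont : ContinuousOn φ' (Set.Icc (0:ℝ) ε)) :
    (∫ y in (0:ℝ)..ε, ‖φ' y‖ ^ 2) + α * (‖φ ε‖ ^ 2 - ‖φ 0‖ ^ 2) ≥
      -α ^ 2 * ∫ y in (0:ℝ)..ε, ‖φ y‖ ^ 2 := by
  have hε' : (0:ℝ) ≤ ε := hε.le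
  have huIcc : Set.uIcc (0:ℝ) ε = Set.Icc 0 ε := Set.uIcc_of_le hε'
  set g : ℝ → ℝ := fun y => 2 * ((φ y).re * (φ' y).re + (φ y).im * (φ' y).im) with hgdef
  have hφcont : ContinuousOn φ (Set.Icc 0 ε) := fun x hx =>
    (hderiv x hx).continuousAt.continuousWithinAt
  have hnormsq : ∀ z : ℂ, ‖z‖ ^ 2 = z.re ^ 2 + z.im ^ 2 := by
    intro z
    rw [Complex.sq_norm, Complex.normSq_apply]
    ring
  -- derivative of ‖φ‖²
  have hnsq : ∀ x ∈ Set.uIcc (0:ℝ) ε, HasDerivAt (fun y => ‖φ y‖ ^ 2) (g x) x := by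
    intro x hx
    rw [huIcc] at hx
    have h := hderiv x hx
    have hre : HasDerivAt (fun y => (φ y).re) (φ' x).re x :=
      (Complex.reCLM.hasFDerivAt.comp_hasDerivAt x h)
    have him : HasDerivAt (fun y => (φ y).im) (φ' x).im x :=
      (Complex.imCLM.hasFDerivAt.comp_hasDerivAt x h)
    have h2 : HasDerivAt (fun y => (φ y).re ^ 2 + (φ y).im ^ 2) (g x) x := by
      have : HasDerivAt (fun y => (φ y).re ^ 2 + (φ y).im ^ 2) _ x := (hre.pow 2).add (him.pow 2)
      convert this using 1
      simp [hgdef]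
      ring
    have heq : (fun y => ‖φ y‖ ^ 2) = fun y => (φ y).re ^ 2 + (φ y).im ^ 2 := by
      funext y; exact hnormsq (φ y)
    rw [heq]
    exact h2
  -- continuity bits
  have hφc2 : ContinuousOn (fun y => ‖φ y‖ ^ 2) (Set.Icc (0:ℝ) ε) :=
    (hφcont.norm.pow 2)
  have hφ'c2 : ContinuousOn (fun y => ‖φ' y‖ ^ 2) (Set.Icc (0:ℝ) ε) :=
    (hcont.norm.pow 2)
  have hgc : ContinuousOn g (Set.Icc (0:ℝ) ε) := by
    apply ContinuousOn.mul continuousOn_const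
    exact ((Complex.continuous_re.comp_continuousOn hφcont).mul
      (Complex.continuous_re.comp_continuousOn hcont)).add
      ((Complex.continuous_im.comp_continuousOn hφcont).mul
      (Complex.continuous_im.comp_continuousOn hcont))
  have hgint : IntervalIntegrable g volume 0 ε :=
    (hgc.mono (by rw [huIcc])).intervalIntegrable
  have hφint : IntervalIntegrable (fun y => ‖φ y‖ ^ 2) volume 0 ε :=
    (hφc2.mono (by rw [huIcc])).intervalIntegrable
  have hφ'int : IntervalIntegrable (fun y => ‖φ' y‖ ^ 2) volume 0 ε :=
    (hφ'c2.mono (by rw [huIcc])).intervalIntegrable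
  -- FTC
  have hFTC : ∫ y in (0:ℝ)..ε, g y = ‖φ ε‖ ^ 2 - ‖φ 0‖ ^ 2 :=
    intervalIntegral.integral_eq_sub_of_hasDerivAt hnsq hgint
  -- pointwise bound
  have hpt : ∀ y ∈ Set.Icc (0:ℝ) ε,
      -α ^ 2 * ‖φ y‖ ^ 2 - ‖φ' y‖ ^ 2 ≤ α * g y := by
    intro y _
    have ha2 : ‖φ y‖ ^ 2 = (φ y).re ^ 2 + (φ y).im ^ 2 := hnormsq _
    have hb2 : ‖φ' y‖ ^ 2 = (φ' y).re ^ 2 + (φ' y).im ^ 2 := hnormsq _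
    have hab : 0 ≤ ‖φ y‖ * ‖φ' y‖ := mul_nonneg (norm_nonneg _) (norm_nonneg _)
    have hCS : ((φ y).re * (φ' y).re + (φ y).im * (φ' y).im) ^ 2
        ≤ (‖φ y‖ * ‖φ' y‖) ^ 2 := by
      have h : (‖φ y‖ * ‖φ' y‖) ^ 2
          = ((φ y).re ^ 2 + (φ y).im ^ 2) * ((φ' y).re ^ 2 + (φ' y).im ^ 2) := by
        rw [mul_pow, ha2, hb2]
      rw [h]
      nlinarith [sq_nonneg ((φ y).re * (φ' y).im - (φ y).im * (φ' y).re)]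
    have h1 : (φ y).re * (φ' y).re + (φ y).im * (φ' y).im ≤ ‖φ y‖ * ‖φ' y‖ := by
      nlinarith [hCS, hab]
    have h2 : -(‖φ y‖ * ‖φ' y‖) ≤ (φ y).re * (φ' y).re + (φ y).im * (φ' y).im := by
      nlinarith [hCS, hab]
    have hg : g y = 2 * ((φ y).re * (φ' y).re + (φ y).im * (φ' y).im) := rfl
    rw [hg]
    rcases le_or_gt 0 α with h | h
    · nlinarith [sq_nonneg (α * ‖φ y‖ - ‖φ' y‖), mul_le_mul_of_nonneg_left h2 h]
    · nlinarith [sq_nonneg (α * ‖φ y‖ + ‖φ' y‖),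
        mul_le_mul_of_nonneg_left h1 (neg_nonneg.mpr h.le)]
  -- integrate the bound
  have hlhsint : IntervalIntegrable (fun y => -α ^ 2 * ‖φ y‖ ^ 2 - ‖φ' y‖ ^ 2) volume 0 ε :=
    (hφint.const_mul _).sub hφ'int
  have hmono : ∫ y in (0:ℝ)..ε, (-α ^ 2 * ‖φ y‖ ^ 2 - ‖φ' y‖ ^ 2) ≤
      ∫ y in (0:ℝ)..ε, α * g y :=
    intervalIntegral.integral_mono_on hε' hlhsint (hgint.const_mul α) hpt
  rw [intervalIntegral.integral_const_mul, hFTC] at hmono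
  have hsplit : ∫ y in (0:ℝ)..ε, (-α ^ 2 * ‖φ y‖ ^ 2 - ‖φ' y‖ ^ 2) =
      -α ^ 2 * (∫ y in (0:ℝ)..ε, ‖φ y‖ ^ 2) - ∫ y in (0:ℝ)..ε, ‖φ' y‖ ^ 2 := by
    rw [intervalIntegral.integral_sub (hφint.const_mul _) hφ'int,
      intervalIntegral.integral_const_mul]
  rw [hsplit] at hmono
  linarith
end

section
/- Let α ≠ 0, ε > 0, and μ > 0, μ ≠ α². Then any function ψ(y) = A e^{√μ y} + B e^{−√μ y} satisfying −ψ'(0) − αψ(0) = 0 and ψ'(ε) + αψ(ε) = 0 must be identically zero. Consequently, −α² is the unique negative eigenvalue of the Robin Laplacian −Δ_α^I. -/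
/-- If μ > 0, μ ≠ α², then any ψ(y) = A e^{√μ y} + B e^{−√μ y} satisfying the Robin
boundary conditions −ψ'(0) − αψ(0) = 0, ψ'(ε) + αψ(ε) = 0 (α ≠ 0, ε > 0) vanishes
identically; consequently −α² is the unique negative eigenvalue. -/
theorem robin_unique_negative_eigenvalue (ε α μ : ℝ) (hε : 0 < ε) (hα : α ≠ 0)
    (hμ : 0 < μ) (hμα : μ ≠ α ^ 2) (A B : ℂ)
    (ψ : ℝ → ℂ)
    (hψ : ψ = fun y : ℝ => A * Complex.exp (Real.sqrt μ * y) +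
      B * Complex.exp (-(Real.sqrt μ) * y))
    (h0 : -(deriv ψ 0) - (α : ℂ) * ψ 0 = 0)
    (hbd : deriv ψ ε + (α : ℂ) * ψ ε = 0) :
    ∀ y : ℝ, ψ y = 0 := by
  set s : ℝ := Real.sqrt μ with hs
  have hspos : 0 < s := Real.sqrt_pos.mpr hμ
  have hs2 : s ^ 2 = μ := Real.sq_sqrt hμ.le
  set c : ℂ := (s : ℂ) with hc
  -- derivative of ψ
  have hder : ∀ y : ℝ, HasDerivAt ψ
      (A * c * Complex.exp (c * y) + B * (-c) * Complex.exp (-c * y)) y := by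
    intro y
    have hid : HasDerivAt (fun y : ℝ => (y : ℂ)) 1 y := by
      simpa using (hasDerivAt_id y).ofReal_comp
    have h1 : HasDerivAt (fun y : ℝ => c * (y : ℂ)) c y := by
      simpa using hid.const_mul c
    have h2 : HasDerivAt (fun y : ℝ => (-c) * (y : ℂ)) (-c) y := by
      simpa using hid.const_mul (-c)
    have e1 := (h1.cexp).const_mul A
    have e2 := (h2.cexp).const_mul B
    have := e1.add e2
    rw [hψ]
    exact this.congr_deriv (by ring)
  have hderiv : ∀ y : ℝ,
      deriv ψ y = A * c * Complex.exp (c * y) + B * (-c) * Complex.exp (-c * y) :=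
    fun y => (hder y).deriv
  -- boundary condition at 0
  have heq0 : (c + α) * A = (c - α) * B := by
    have h := h0
    rw [hderiv 0, hψ] at h
    simp only [Complex.ofReal_zero, mul_zero, neg_mul, neg_zero, Complex.exp_zero] at h
    linear_combination -h
  -- boundary condition at ε
  set E : ℂ := Complex.exp (c * ε) with hE
  set E' : ℂ := Complex.exp (-c * ε) with hE'
  have heqε : (c + α) * A * E = (c - α) * B * E' := by
    have h := hbd
    rw [hderiv ε, hψ] at h
    simp only [← hE, ← hE'] at h
    linear_combination h
  -- E ≠ E'
  have hEE : E ≠ E' := by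
    have h1 : E = (Real.exp (s * ε) : ℂ) := by
      rw [hE, hc, ← Complex.ofReal_mul, Complex.ofReal_exp]
    have h2 : E' = (Real.exp (-(s * ε)) : ℂ) := by
      rw [hE', hc, ← Complex.ofReal_neg, ← Complex.ofReal_mul, Complex.ofReal_exp]
      ring_nf
    rw [h1, h2]
    intro h
    have h' : Real.exp (s * ε) = Real.exp (-(s * ε)) := by exact_mod_cast h
    have h3 : s * ε = -(s * ε) := Real.exp_injective h'
    nlinarith [mul_pos hspos hε]
  -- nonvanishing of c ± α
  have hsum : s + α ≠ 0 := by
    intro h; apply hμα; nlinarith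
  have hdiff : s - α ≠ 0 := by
    intro h; apply hμα; nlinarith
  have hcsum : c + (α : ℂ) ≠ 0 := by
    rw [hc]
    intro h
    exact hsum (by exact_mod_cast congrArg Complex.re h)
  have hcdiff : c - (α : ℂ) ≠ 0 := by
    rw [hc]
    intro h
    exact hdiff (by exact_mod_cast congrArg Complex.re h)
  -- with u = (c+α)A = (c-α)B, u(E - E') = 0, so u = 0
  have hprod : (c + α) * A * (E - E') = 0 := by
    linear_combination heqε - E' * heq0
  have hA : A = 0 := by
    rcases mul_eq_zero.mp hprod with h | h
    · rcases mul_eq_zero.mp h with h' | h'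
      · exact absurd h' hcsum
      · exact h'
    · exact absurd (sub_eq_zero.mp h) hEE
  have hB : B = 0 := by
    have : (c - α) * B = 0 := by rw [← heq0, hA, mul_zero]
    rcases mul_eq_zero.mp this with h | h
    · exact absurd h hcdiff
    · exact h
  intro y
  rw [hψ]
  simp [hA, hB]
end

section
/- Let {e_n}_{n≥0} be an orthonormal basis of a Hilbert space H and {ψ_n}_{n≥0} a sequence in H with Σ_{n≥0} ‖ψ_n − e_n‖² < 1. Then the family {ψ_n} is complete: if x ∈ H satisfies ⟨ψ_n, x⟩ = 0 for all n, then x = 0. -/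
open scoped InnerProductSpace

/-- Stability of completeness (Paley–Wiener/Kato): if {e_n} is an orthonormal basis of a
Hilbert space H and {ψ_n} satisfies Σ‖ψ_n − e_n‖² < 1, then {ψ_n} is complete: any x
orthogonal to every ψ_n is zero. -/
theorem complete_of_small_perturbation
    {H : Type*} [NormedAddCommGroup H] [InnerProductSpace ℂ H] [CompleteSpace H]
    (e : HilbertBasis ℕ ℂ H) (ψ : ℕ → H)
    (hsum : Summable (fun n => ‖ψ n - e n‖ ^ 2))
    (hlt : (∑' n, ‖ψ n - e n‖ ^ 2) < 1) :
    ∀ x : H, (∀ n, ⟪ψ n, x⟫_ℂ = 0) → x = 0 := by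
  intro x hx
  by_contra hne
  have hS : HasSum (fun n => ⟪x, e n⟫_ℂ * ⟪e n, x⟫_ℂ) ⟪x, x⟫_ℂ :=
    e.hasSum_inner_mul_inner x x
  have hterm : ∀ n, ⟪x, e n⟫_ℂ * ⟪e n, x⟫_ℂ = ((‖⟪e n, x⟫_ℂ‖ ^ 2 : ℝ) : ℂ) := by
    intro n
    have h : ⟪x, e n⟫_ℂ = (starRingEnd ℂ) ⟪e n, x⟫_ℂ := (inner_conj_symm _ _).symm
    rw [h, RCLike.conj_mul]
    norm_cast
  have hSre : HasSum (fun n => ‖⟪e n, x⟫_ℂ‖ ^ 2) (‖x‖ ^ 2) := by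
    have := hS.mapL Complex.reCLM
    simp only [hterm, Complex.reCLM_apply, Complex.ofReal_re] at this
    convert this using 1
    simpa using (inner_self_eq_norm_sq (𝕜 := ℂ) x).symm
  have hbound : ∀ n, ‖⟪e n, x⟫_ℂ‖ ^ 2 ≤ ‖ψ n - e n‖ ^ 2 * ‖x‖ ^ 2 := by
    intro n
    have h1 : ⟪e n, x⟫_ℂ = -⟪ψ n - e n, x⟫_ℂ := by
      rw [inner_sub_left, hx n]; ring
    rw [h1, norm_neg]
    calc ‖⟪ψ n - e n, x⟫_ℂ‖ ^ 2 ≤ (‖ψ n - e n‖ * ‖x‖) ^ 2 := by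
          gcongr; exact norm_inner_le_norm _ _
      _ = ‖ψ n - e n‖ ^ 2 * ‖x‖ ^ 2 := by ring
  have hle : ‖x‖ ^ 2 ≤ (∑' n, ‖ψ n - e n‖ ^ 2) * ‖x‖ ^ 2 :=
    calc ‖x‖ ^ 2 = ∑' n, ‖⟪e n, x⟫_ℂ‖ ^ 2 := hSre.tsum_eq.symm
      _ ≤ ∑' n, ‖ψ n - e n‖ ^ 2 * ‖x‖ ^ 2 :=
          Summable.tsum_le_tsum hbound hSre.summable (hsum.mul_right _)
      _ = (∑' n, ‖ψ n - e n‖ ^ 2) * ‖x‖ ^ 2 := tsum_mul_right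
  have hx0 : 0 < ‖x‖ := norm_pos_iff.mpr hne
  have hx2 : 0 < ‖x‖ ^ 2 := by positivity
  nlinarith
end
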